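/- For all real x, y and all nonnegative integers n, m, the 6-term recurrence (m+1)·L_{n+1,m+1}(x,y) = (2m+1-y)·L_{n+1,m}(x,y) + 2(m+1)·L_{n,m+1}(x,y) - m·L_{n+1,m-1}(x,y) - (2m+1+x-y)·L_{n,m}(x,y) - (m+1)·L_{n-1,m+1}(x,y) holds, where L_{a,b}(x,y) := 0 whenever a < 0 or b < 0. -/

import Mathlib

noncomputable def L2 (n m : ℕ) (x y : ℝ) : ℝ :=
  ∑ i ∈ Finset.range (m+1), ∑ s ∈ Finset.range (n+1),
    ((-1:ℝ)^(i+s) / ((Nat.factorial i) * (Nat.factorial s))) *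
      ((m+n).choose (m-i)) * ((n+i).choose (n-s)) * x^s * y^i

noncomputable def L2Z (n m : ℤ) (x y : ℝ) : ℝ :=
  if n < 0 ∨ m < 0 then 0 else L2 n.toNat m.toNat x y

noncomputable def rr (k : ℤ) : ℝ := if k < 0 then 0 else 1 / (Nat.factorial k.toNat)

lemma rr_neg {k : ℤ} (h : k < 0) : rr k = 0 := by simp [rr, h]

lemma rr_natCast (k : ℕ) : rr (k : ℤ) = 1 / (Nat.factorial k : ℝ) := by
  simp [rr]

lemma rr_rec (k : ℤ) : rr k = ((k : ℝ) + 1) * rr (k + 1) := by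
  rcases lt_trichotomy k (-1) with h | h | h
  · rw [rr_neg (by omega), rr_neg (by omega)]; ring
  · subst h; rw [rr_neg (by omega)]; norm_num
  · have hk : 0 ≤ k := by omega
    have h1 : (k+1).toNat = k.toNat + 1 := by omega
    rw [rr, rr, if_neg (by omega), if_neg (by omega), h1, Nat.factorial_succ]
    have h2 : ((k.toNat : ℝ)) = (k : ℝ) := by exact_mod_cast Int.toNat_of_nonneg hk
    have h3 : ((Nat.factorial k.toNat : ℝ)) ≠ 0 := by
      exact_mod_cast Nat.factorial_ne_zero _
    push_cast
    rw [h2]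
    field_simp

lemma rr_sub (a b : ℕ) (h : b ≤ a) : rr ((a:ℤ) - b) = 1 / (Nat.factorial (a - b) : ℝ) := by
  rw [rr, if_neg (by omega)]
  have : ((a:ℤ) - b).toNat = a - b := by omega
  rw [this]

lemma rr_add (a b : ℕ) : rr ((a:ℤ) + b) = 1 / (Nat.factorial (a + b) : ℝ) := by
  have : (a:ℤ) + b = ((a+b : ℕ) : ℤ) := by push_cast; ring
  rw [this, rr_natCast]

lemma bridge (n m i s : ℕ) (hi : i ≤ m) (hs : s ≤ n) :
    ((-1:ℝ)^(i+s) / ((Nat.factorial i) * (Nat.factorial s))) *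
      ((m+n).choose (m-i)) * ((n+i).choose (n-s))
      = (-1:ℝ)^(i+s) * (Nat.factorial (m+n) : ℝ) * rr i * rr s *
        rr ((m:ℤ) - i) * rr ((n:ℤ) - s) * rr ((i:ℤ) + s) := by
  rw [rr_natCast, rr_natCast, rr_sub m i hi, rr_sub n s hs, rr_add]
  rw [Nat.cast_choose ℝ (show m - i ≤ m + n by omega),
      Nat.cast_choose ℝ (show n - s ≤ n + i by omega)]
  have e1 : m + n - (m - i) = n + i := by omega
  have e2 : n + i - (n - s) = i + s := by omega
  rw [e1, e2]
  have f1 : ((Nat.factorial i : ℝ)) ≠ 0 := by exact_mod_cast Nat.factorial_ne_zero _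
  have f2 : ((Nat.factorial s : ℝ)) ≠ 0 := by exact_mod_cast Nat.factorial_ne_zero _
  have f3 : ((Nat.factorial (m-i) : ℝ)) ≠ 0 := by exact_mod_cast Nat.factorial_ne_zero _
  have f4 : ((Nat.factorial (n-s) : ℝ)) ≠ 0 := by exact_mod_cast Nat.factorial_ne_zero _
  have f5 : ((Nat.factorial (n+i) : ℝ)) ≠ 0 := by exact_mod_cast Nat.factorial_ne_zero _
  have f6 : ((Nat.factorial (i+s) : ℝ)) ≠ 0 := by exact_mod_cast Nat.factorial_ne_zero _
  field_simp

lemma L2_expand (n m P Q : ℕ) (hP : m+1 ≤ P) (hQ : n+1 ≤ Q) (M N : ℤ)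
    (hM : M = (m:ℤ)) (hN : N = (n:ℤ)) (F : ℕ) (hF : F = m+n) (x y : ℝ) :
    L2 n m x y = ∑ i ∈ Finset.range P, ∑ s ∈ Finset.range Q,
      ((-1:ℝ)^(i+s) * (Nat.factorial F : ℝ) * rr i * rr s * rr (M - i) * rr (N - s) *
        rr ((i:ℤ) + s)) * x^s * y^i := by
  subst hM; subst hN; subst hF
  simp only [L2]
  have inner_eq : ∀ i ∈ Finset.range (m+1),
      (∑ s ∈ Finset.range (n+1),
        ((-1:ℝ)^(i+s) / ((Nat.factorial i) * (Nat.factorial s))) *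
          ((m+n).choose (m-i)) * ((n+i).choose (n-s)) * x^s * y^i)
      = ∑ s ∈ Finset.range Q,
        ((-1:ℝ)^(i+s) * (Nat.factorial (m+n) : ℝ) * rr i * rr s * rr ((m:ℤ) - i) *
          rr ((n:ℤ) - s) * rr ((i:ℤ) + s)) * x^s * y^i := by
    intro i hi
    rw [Finset.mem_range] at hi
    have step1 : (∑ s ∈ Finset.range (n+1),
        ((-1:ℝ)^(i+s) / ((Nat.factorial i) * (Nat.factorial s))) *
          ((m+n).choose (m-i)) * ((n+i).choose (n-s)) * x^s * y^i)
        = ∑ s ∈ Finset.range (n+1),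
        ((-1:ℝ)^(i+s) * (Nat.factorial (m+n) : ℝ) * rr i * rr s * rr ((m:ℤ) - i) *
          rr ((n:ℤ) - s) * rr ((i:ℤ) + s)) * x^s * y^i := by
      refine Finset.sum_congr rfl fun s hs => ?_
      rw [Finset.mem_range] at hs
      rw [bridge n m i s (by omega) (by omega)]
    rw [step1]
    refine Finset.sum_subset (Finset.range_subset_range.mpr hQ) fun s _ hs => ?_
    rw [Finset.mem_range, not_lt] at hs
    rw [rr_neg (show (n:ℤ) - (s:ℤ) < 0 by omega)]
    ring
  rw [Finset.sum_congr rfl inner_eq]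
  refine Finset.sum_subset (Finset.range_subset_range.mpr hP) fun i _ hi => ?_
  rw [Finset.mem_range, not_lt] at hi
  refine Finset.sum_eq_zero fun s _ => ?_
  rw [rr_neg (show (m:ℤ) - (i:ℤ) < 0 by omega)]
  ring

lemma shift_y (P Q Fc : ℕ) (M N : ℤ) (x y : ℝ) :
    y * (∑ i ∈ Finset.range P, ∑ s ∈ Finset.range Q,
        ((-1:ℝ)^(i+s) * (Nat.factorial Fc : ℝ) * rr i * rr s * rr (M - i) * rr (N - s) *
          rr ((i:ℤ) + s)) * x^s * y^i)
    = ∑ i ∈ Finset.range (P+1), ∑ s ∈ Finset.range Q,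
        (-(-1:ℝ)^(i+s) * (Nat.factorial Fc : ℝ) * rr ((i:ℤ) - 1) * rr s * rr (M + 1 - i) *
          rr (N - s) * rr ((i:ℤ) + s - 1)) * x^s * y^i := by
  rw [Finset.sum_range_succ']
  have h0 : (∑ s ∈ Finset.range Q,
      (-(-1:ℝ)^((0:ℕ)+s) * (Nat.factorial Fc : ℝ) * rr (((0:ℕ):ℤ) - 1) * rr s *
        rr (M + 1 - ((0:ℕ):ℤ)) * rr (N - s) * rr (((0:ℕ):ℤ) + s - 1)) * x^s * y^(0:ℕ)) = 0 := by
    refine Finset.sum_eq_zero fun s _ => ?_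
    rw [rr_neg (show ((0:ℕ):ℤ) - 1 < 0 by omega)]
    ring
  rw [h0, add_zero, Finset.mul_sum]
  refine Finset.sum_congr rfl fun i _ => ?_
  rw [Finset.mul_sum]
  refine Finset.sum_congr rfl fun s _ => ?_
  rw [show (((i+1:ℕ)):ℤ) - 1 = (i:ℤ) by push_cast; ring,
      show M + 1 - (((i+1:ℕ)):ℤ) = M - i by push_cast; ring,
      show (((i+1:ℕ)):ℤ) + s - 1 = (i:ℤ) + s by push_cast; ring,
      show i+1+s = (i+s)+1 by omega, pow_succ]
  ring

lemma shift_x (P Q Fc : ℕ) (M N : ℤ) (x y : ℝ) :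
    x * (∑ i ∈ Finset.range P, ∑ s ∈ Finset.range Q,
        ((-1:ℝ)^(i+s) * (Nat.factorial Fc : ℝ) * rr i * rr s * rr (M - i) * rr (N - s) *
          rr ((i:ℤ) + s)) * x^s * y^i)
    = ∑ i ∈ Finset.range P, ∑ s ∈ Finset.range (Q+1),
        (-(-1:ℝ)^(i+s) * (Nat.factorial Fc : ℝ) * rr i * rr ((s:ℤ) - 1) * rr (M - i) *
          rr (N + 1 - s) * rr ((i:ℤ) + s - 1)) * x^s * y^i := by
  rw [Finset.mul_sum]
  refine Finset.sum_congr rfl fun i _ => ?_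
  rw [Finset.sum_range_succ']
  have h0 : (-(-1:ℝ)^(i+(0:ℕ)) * (Nat.factorial Fc : ℝ) * rr i * rr (((0:ℕ):ℤ) - 1) *
      rr (M - i) * rr (N + 1 - ((0:ℕ):ℤ)) * rr ((i:ℤ) + ((0:ℕ):ℤ) - 1)) * x^(0:ℕ) * y^i = 0 := by
    rw [rr_neg (show ((0:ℕ):ℤ) - 1 < 0 by omega)]
    ring
  rw [h0, add_zero, Finset.mul_sum]
  refine Finset.sum_congr rfl fun s _ => ?_
  rw [show (((s+1:ℕ)):ℤ) - 1 = (s:ℤ) by push_cast; ring,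
      show N + 1 - (((s+1:ℕ)):ℤ) = N - s by push_cast; ring,
      show (i:ℤ) + (((s+1:ℕ)):ℤ) - 1 = (i:ℤ) + s by push_cast; ring,
      show i+(s+1) = (i+s)+1 by omega, pow_succ]
  ring

lemma PT (m n i s : ℕ) (x y : ℝ) :
    ((m:ℝ)+1) * (((-1:ℝ)^(i+s) * (Nat.factorial (m+n+2) : ℝ) * rr i * rr s *
        rr ((m:ℤ) + 1 - i) * rr ((n:ℤ) + 1 - s) * rr ((i:ℤ) + s)) * x^s * y^i)
    = (2*(m:ℝ)+1) * (((-1:ℝ)^(i+s) * (Nat.factorial (m+n+1) : ℝ) * rr i * rr s *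
        rr ((m:ℤ) - i) * rr ((n:ℤ) + 1 - s) * rr ((i:ℤ) + s)) * x^s * y^i)
      - ((-(-1:ℝ)^(i+s) * (Nat.factorial (m+n+1) : ℝ) * rr ((i:ℤ) - 1) * rr s *
        rr ((m:ℤ) + 1 - i) * rr ((n:ℤ) + 1 - s) * rr ((i:ℤ) + s - 1)) * x^s * y^i)
      + 2*((m:ℝ)+1) * (((-1:ℝ)^(i+s) * (Nat.factorial (m+n+1) : ℝ) * rr i * rr s *
        rr ((m:ℤ) + 1 - i) * rr ((n:ℤ) - s) * rr ((i:ℤ) + s)) * x^s * y^i)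
      - (m:ℝ) * (((-1:ℝ)^(i+s) * (Nat.factorial (m+n) : ℝ) * rr i * rr s *
        rr ((m:ℤ) - 1 - i) * rr ((n:ℤ) + 1 - s) * rr ((i:ℤ) + s)) * x^s * y^i)
      - (2*(m:ℝ)+1) * (((-1:ℝ)^(i+s) * (Nat.factorial (m+n) : ℝ) * rr i * rr s *
        rr ((m:ℤ) - i) * rr ((n:ℤ) - s) * rr ((i:ℤ) + s)) * x^s * y^i)
      - ((-(-1:ℝ)^(i+s) * (Nat.factorial (m+n) : ℝ) * rr i * rr ((s:ℤ) - 1) *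
        rr ((m:ℤ) - i) * rr ((n:ℤ) + 1 - s) * rr ((i:ℤ) + s - 1)) * x^s * y^i)
      + ((-(-1:ℝ)^(i+s) * (Nat.factorial (m+n) : ℝ) * rr ((i:ℤ) - 1) * rr s *
        rr ((m:ℤ) + 1 - i) * rr ((n:ℤ) - s) * rr ((i:ℤ) + s - 1)) * x^s * y^i)
      - ((m:ℝ)+1) * (((-1:ℝ)^(i+s) * (Nat.factorial (m+n) : ℝ) * rr i * rr s *
        rr ((m:ℤ) + 1 - i) * rr ((n:ℤ) - 1 - s) * rr ((i:ℤ) + s)) * x^s * y^i) := by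
  have e2 : rr ((m:ℤ) - 1 - i) = ((m:ℝ) - i) * rr ((m:ℤ) - i) := by
    rw [rr_rec ((m:ℤ) - 1 - i), show (m:ℤ) - 1 - i + 1 = (m:ℤ) - i by ring]
    push_cast; ring
  have e1 : rr ((m:ℤ) - i) = ((m:ℝ) - i + 1) * rr ((m:ℤ) + 1 - i) := by
    rw [rr_rec ((m:ℤ) - i), show (m:ℤ) - i + 1 = (m:ℤ) + 1 - i by ring]
    push_cast; ring
  have e4 : rr ((n:ℤ) - 1 - s) = ((n:ℝ) - s) * rr ((n:ℤ) - s) := by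
    rw [rr_rec ((n:ℤ) - 1 - s), show (n:ℤ) - 1 - s + 1 = (n:ℤ) - s by ring]
    push_cast; ring
  have e3 : rr ((n:ℤ) - s) = ((n:ℝ) - s + 1) * rr ((n:ℤ) + 1 - s) := by
    rw [rr_rec ((n:ℤ) - s), show (n:ℤ) - s + 1 = (n:ℤ) + 1 - s by ring]
    push_cast; ring
  have e5 : rr ((i:ℤ) - 1) = (i:ℝ) * rr (i:ℤ) := by
    rw [rr_rec ((i:ℤ) - 1), show (i:ℤ) - 1 + 1 = (i:ℤ) by ring]
    push_cast; ring
  have e6 : rr ((s:ℤ) - 1) = (s:ℝ) * rr (s:ℤ) := by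
    rw [rr_rec ((s:ℤ) - 1), show (s:ℤ) - 1 + 1 = (s:ℤ) by ring]
    push_cast; ring
  have e7 : rr ((i:ℤ) + s - 1) = ((i:ℝ) + s) * rr ((i:ℤ) + s) := by
    rw [rr_rec ((i:ℤ) + s - 1), show (i:ℤ) + s - 1 + 1 = (i:ℤ) + s by ring]
    push_cast; ring
  have f1 : (Nat.factorial (m+n+2) : ℝ) = ((m:ℝ)+n+2) * ((m:ℝ)+n+1) * (Nat.factorial (m+n) : ℝ) := by
    rw [show m+n+2 = (m+n+1)+1 from rfl, Nat.factorial_succ,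
        show m+n+1 = (m+n)+1 from rfl, Nat.factorial_succ]
    push_cast; ring
  have f2 : (Nat.factorial (m+n+1) : ℝ) = ((m:ℝ)+n+1) * (Nat.factorial (m+n) : ℝ) := by
    rw [show m+n+1 = (m+n)+1 from rfl, Nat.factorial_succ]
    push_cast; ring
  rw [e2, e1, e4, e3, e5, e6, e7, f1, f2]
  ring

theorem stmt6 (x y : ℝ) (n m : ℕ) :
    ((m:ℝ)+1) * L2Z (n+1) (m+1) x y =
      (2*(m:ℝ)+1-y) * L2Z (n+1) m x y + 2*((m:ℝ)+1) * L2Z n (m+1) x y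
      - (m:ℝ) * L2Z (n+1) ((m:ℤ)-1) x y
      - (2*(m:ℝ)+1+x-y) * L2Z n m x y - ((m:ℝ)+1) * L2Z ((n:ℤ)-1) (m+1) x y := by
  -- expansions
  have h_A : L2 (n+1) (m+1) x y = ∑ i ∈ Finset.range (m+2), ∑ s ∈ Finset.range (n+2),
      ((-1:ℝ)^(i+s) * (Nat.factorial (m+n+2) : ℝ) * rr i * rr s * rr ((m:ℤ) + 1 - i) *
        rr ((n:ℤ) + 1 - s) * rr ((i:ℤ) + s)) * x^s * y^i :=
    L2_expand (n+1) (m+1) (m+2) (n+2) (by omega) (by omega) ((m:ℤ)+1) ((n:ℤ)+1)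
      (by push_cast; ring) (by push_cast; ring) (m+n+2) (by omega) x y
  have h_B : L2 (n+1) m x y = ∑ i ∈ Finset.range (m+2), ∑ s ∈ Finset.range (n+2),
      ((-1:ℝ)^(i+s) * (Nat.factorial (m+n+1) : ℝ) * rr i * rr s * rr ((m:ℤ) - i) *
        rr ((n:ℤ) + 1 - s) * rr ((i:ℤ) + s)) * x^s * y^i :=
    L2_expand (n+1) m (m+2) (n+2) (by omega) (by omega) ((m:ℤ)) ((n:ℤ)+1)
      rfl (by push_cast; ring) (m+n+1) (by omega) x y
  have h_yB : y * L2 (n+1) m x y = ∑ i ∈ Finset.range (m+2), ∑ s ∈ Finset.range (n+2),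
      (-(-1:ℝ)^(i+s) * (Nat.factorial (m+n+1) : ℝ) * rr ((i:ℤ) - 1) * rr s *
        rr ((m:ℤ) + 1 - i) * rr ((n:ℤ) + 1 - s) * rr ((i:ℤ) + s - 1)) * x^s * y^i := by
    rw [L2_expand (n+1) m (m+1) (n+2) (by omega) (by omega) ((m:ℤ)) ((n:ℤ)+1)
      rfl (by push_cast; ring) (m+n+1) (by omega) x y]
    exact shift_y (m+1) (n+2) (m+n+1) ((m:ℤ)) ((n:ℤ)+1) x y
  have h_C : L2 n (m+1) x y = ∑ i ∈ Finset.range (m+2), ∑ s ∈ Finset.range (n+2),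
      ((-1:ℝ)^(i+s) * (Nat.factorial (m+n+1) : ℝ) * rr i * rr s * rr ((m:ℤ) + 1 - i) *
        rr ((n:ℤ) - s) * rr ((i:ℤ) + s)) * x^s * y^i :=
    L2_expand n (m+1) (m+2) (n+2) (by omega) (by omega) ((m:ℤ)+1) ((n:ℤ))
      (by push_cast; ring) rfl (m+n+1) (by omega) x y
  have h_D : L2 n m x y = ∑ i ∈ Finset.range (m+2), ∑ s ∈ Finset.range (n+2),
      ((-1:ℝ)^(i+s) * (Nat.factorial (m+n) : ℝ) * rr i * rr s * rr ((m:ℤ) - i) *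
        rr ((n:ℤ) - s) * rr ((i:ℤ) + s)) * x^s * y^i :=
    L2_expand n m (m+2) (n+2) (by omega) (by omega) ((m:ℤ)) ((n:ℤ))
      rfl rfl (m+n) (by omega) x y
  have h_xD : x * L2 n m x y = ∑ i ∈ Finset.range (m+2), ∑ s ∈ Finset.range (n+2),
      (-(-1:ℝ)^(i+s) * (Nat.factorial (m+n) : ℝ) * rr i * rr ((s:ℤ) - 1) *
        rr ((m:ℤ) - i) * rr ((n:ℤ) + 1 - s) * rr ((i:ℤ) + s - 1)) * x^s * y^i := by
    rw [L2_expand n m (m+2) (n+1) (by omega) (by omega) ((m:ℤ)) ((n:ℤ))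
      rfl rfl (m+n) (by omega) x y]
    exact shift_x (m+2) (n+1) (m+n) ((m:ℤ)) ((n:ℤ)) x y
  have h_yD : y * L2 n m x y = ∑ i ∈ Finset.range (m+2), ∑ s ∈ Finset.range (n+2),
      (-(-1:ℝ)^(i+s) * (Nat.factorial (m+n) : ℝ) * rr ((i:ℤ) - 1) * rr s *
        rr ((m:ℤ) + 1 - i) * rr ((n:ℤ) - s) * rr ((i:ℤ) + s - 1)) * x^s * y^i := by
    rw [L2_expand n m (m+1) (n+2) (by omega) (by omega) ((m:ℤ)) ((n:ℤ))
      rfl rfl (m+n) (by omega) x y]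
    exact shift_y (m+1) (n+2) (m+n) ((m:ℤ)) ((n:ℤ)) x y
  have h_E : L2Z ((n:ℤ)+1) ((m:ℤ)-1) x y = ∑ i ∈ Finset.range (m+2), ∑ s ∈ Finset.range (n+2),
      ((-1:ℝ)^(i+s) * (Nat.factorial (m+n) : ℝ) * rr i * rr s * rr ((m:ℤ) - 1 - i) *
        rr ((n:ℤ) + 1 - s) * rr ((i:ℤ) + s)) * x^s * y^i := by
    by_cases hm : m = 0
    · subst hm
      rw [L2Z, if_pos (by omega)]
      symm
      refine Finset.sum_eq_zero fun i _ => Finset.sum_eq_zero fun s _ => ?_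
      rw [rr_neg (show ((0:ℕ):ℤ) - 1 - (i:ℤ) < 0 by omega)]
      ring
    · obtain ⟨m', rfl⟩ : ∃ m', m = m' + 1 := ⟨m-1, by omega⟩
      rw [L2Z, if_neg (by push_cast; omega)]
      rw [show ((n:ℤ)+1).toNat = n+1 by omega,
          show (((m'+1:ℕ):ℤ)-1).toNat = m' by omega]
      exact L2_expand (n+1) m' (m'+1+2) (n+2) (by omega) (by omega)
        (((m'+1:ℕ):ℤ)-1) ((n:ℤ)+1) (by push_cast; ring) (by push_cast; ring)
        (m'+1+n) (by omega) x y
  have h_F : L2Z ((n:ℤ)-1) ((m:ℤ)+1) x y = ∑ i ∈ Finset.range (m+2), ∑ s ∈ Finset.range (n+2),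
      ((-1:ℝ)^(i+s) * (Nat.factorial (m+n) : ℝ) * rr i * rr s * rr ((m:ℤ) + 1 - i) *
        rr ((n:ℤ) - 1 - s) * rr ((i:ℤ) + s)) * x^s * y^i := by
    by_cases hn : n = 0
    · subst hn
      rw [L2Z, if_pos (by omega)]
      symm
      refine Finset.sum_eq_zero fun i _ => Finset.sum_eq_zero fun s _ => ?_
      rw [rr_neg (show ((0:ℕ):ℤ) - 1 - (s:ℤ) < 0 by omega)]
      ring
    · obtain ⟨n', rfl⟩ : ∃ n', n = n' + 1 := ⟨n-1, by omega⟩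
      rw [L2Z, if_neg (by push_cast; omega)]
      rw [show (((n'+1:ℕ):ℤ)-1).toNat = n' by omega,
          show ((m:ℤ)+1).toNat = m+1 by omega]
      exact L2_expand n' (m+1) (m+2) (n'+1+2) (by omega) (by omega)
        ((m:ℤ)+1) (((n'+1:ℕ):ℤ)-1) (by push_cast; ring) (by push_cast; ring)
        (m+(n'+1)) (by omega) x y
  have KEY : ((m:ℝ)+1) * (∑ i ∈ Finset.range (m+2), ∑ s ∈ Finset.range (n+2),
        ((-1:ℝ)^(i+s) * (Nat.factorial (m+n+2) : ℝ) * rr i * rr s * rr ((m:ℤ) + 1 - i) *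
          rr ((n:ℤ) + 1 - s) * rr ((i:ℤ) + s)) * x^s * y^i)
      = (2*(m:ℝ)+1) * (∑ i ∈ Finset.range (m+2), ∑ s ∈ Finset.range (n+2),
        ((-1:ℝ)^(i+s) * (Nat.factorial (m+n+1) : ℝ) * rr i * rr s * rr ((m:ℤ) - i) *
          rr ((n:ℤ) + 1 - s) * rr ((i:ℤ) + s)) * x^s * y^i)
      - (∑ i ∈ Finset.range (m+2), ∑ s ∈ Finset.range (n+2),
        (-(-1:ℝ)^(i+s) * (Nat.factorial (m+n+1) : ℝ) * rr ((i:ℤ) - 1) * rr s *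
          rr ((m:ℤ) + 1 - i) * rr ((n:ℤ) + 1 - s) * rr ((i:ℤ) + s - 1)) * x^s * y^i)
      + 2*((m:ℝ)+1) * (∑ i ∈ Finset.range (m+2), ∑ s ∈ Finset.range (n+2),
        ((-1:ℝ)^(i+s) * (Nat.factorial (m+n+1) : ℝ) * rr i * rr s * rr ((m:ℤ) + 1 - i) *
          rr ((n:ℤ) - s) * rr ((i:ℤ) + s)) * x^s * y^i)
      - (m:ℝ) * (∑ i ∈ Finset.range (m+2), ∑ s ∈ Finset.range (n+2),
        ((-1:ℝ)^(i+s) * (Nat.factorial (m+n) : ℝ) * rr i * rr s * rr ((m:ℤ) - 1 - i) *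
          rr ((n:ℤ) + 1 - s) * rr ((i:ℤ) + s)) * x^s * y^i)
      - (2*(m:ℝ)+1) * (∑ i ∈ Finset.range (m+2), ∑ s ∈ Finset.range (n+2),
        ((-1:ℝ)^(i+s) * (Nat.factorial (m+n) : ℝ) * rr i * rr s * rr ((m:ℤ) - i) *
          rr ((n:ℤ) - s) * rr ((i:ℤ) + s)) * x^s * y^i)
      - (∑ i ∈ Finset.range (m+2), ∑ s ∈ Finset.range (n+2),
        (-(-1:ℝ)^(i+s) * (Nat.factorial (m+n) : ℝ) * rr i * rr ((s:ℤ) - 1) *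
          rr ((m:ℤ) - i) * rr ((n:ℤ) + 1 - s) * rr ((i:ℤ) + s - 1)) * x^s * y^i)
      + (∑ i ∈ Finset.range (m+2), ∑ s ∈ Finset.range (n+2),
        (-(-1:ℝ)^(i+s) * (Nat.factorial (m+n) : ℝ) * rr ((i:ℤ) - 1) * rr s *
          rr ((m:ℤ) + 1 - i) * rr ((n:ℤ) - s) * rr ((i:ℤ) + s - 1)) * x^s * y^i)
      - ((m:ℝ)+1) * (∑ i ∈ Finset.range (m+2), ∑ s ∈ Finset.range (n+2),
        ((-1:ℝ)^(i+s) * (Nat.factorial (m+n) : ℝ) * rr i * rr s * rr ((m:ℤ) + 1 - i) *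
          rr ((n:ℤ) - 1 - s) * rr ((i:ℤ) + s)) * x^s * y^i) := by
    simp only [Finset.mul_sum, ← Finset.sum_sub_distrib, ← Finset.sum_add_distrib]
    refine Finset.sum_congr rfl fun i _ => Finset.sum_congr rfl fun s _ => ?_
    linear_combination PT m n i s x y
  have g1 : L2Z ((n:ℤ)+1) ((m:ℤ)+1) x y = L2 (n+1) (m+1) x y := by
    rw [L2Z, if_neg (by omega), show ((n:ℤ)+1).toNat = n+1 by omega,
        show ((m:ℤ)+1).toNat = m+1 by omega]
  have g2 : L2Z ((n:ℤ)+1) ((m:ℤ)) x y = L2 (n+1) m x y := by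
    rw [L2Z, if_neg (by omega), show ((n:ℤ)+1).toNat = n+1 by omega,
        show ((m:ℤ)).toNat = m by omega]
  have g3 : L2Z ((n:ℤ)) ((m:ℤ)+1) x y = L2 n (m+1) x y := by
    rw [L2Z, if_neg (by omega), show ((n:ℤ)).toNat = n by omega,
        show ((m:ℤ)+1).toNat = m+1 by omega]
  have g4 : L2Z ((n:ℤ)) ((m:ℤ)) x y = L2 n m x y := by
    rw [L2Z, if_neg (by omega), show ((n:ℤ)).toNat = n by omega,
        show ((m:ℤ)).toNat = m by omega]
  rw [g1, g2, g3, g4, h_E, h_F]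
  linear_combination KEY + ((m:ℝ)+1) * h_A - (2*(m:ℝ)+1) * h_B + h_yB
    - 2*((m:ℝ)+1) * h_C + (2*(m:ℝ)+1) * h_D + h_xD - h_yD
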